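/- arXiv:1903.09998 — 2 statements merged into one kernel-verified Lean document; each statement's English description precedes it below -/
import Mathlib

section
/- Let V = V_0 + V_1 with V_1 bounded, μ ∝ e^{-V}, μ_0 ∝ e^{-V_0}, and consider a Metropolis–Hastings chain with ε-independent proposal density q and acceptance function F equal to the Metropolis or Barker rule. Then for every measurable f, the stationary one-step expected squared jump E_μ[|f(X_{k+1}) − f(X_k)|²] satisfies e^{-2 osc V_1} D_0(f) ≤ E_μ[|f(X_{k+1}) − f(X_k)|²] ≤ e^{2 osc V_1} D_0(f), where D_0(f) = E_{μ_0}[|f(X_{k+1}) − f(X_k)|²] is the corresponding quantity for the chain targeting μ_0 with the same proposal. -/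
open MeasureTheory Real

/-- Stationary one-step expected squared jump of a Metropolis–Hastings chain with
proposal density `q`, acceptance function `F`, log-MH-ratio `R`, and target density
`ρ` (normalized by `Z`). -/
noncomputable def oneStepSqJump {n : ℕ} (f : (Fin n → ℝ) → ℝ)
    (q : (Fin n → ℝ) → (Fin n → ℝ) → ℝ) (F : ℝ → ℝ)
    (R : (Fin n → ℝ) → (Fin n → ℝ) → ℝ) (ρ : (Fin n → ℝ) → ℝ) : ℝ :=
  (∫ p : (Fin n → ℝ) × (Fin n → ℝ),
      (f p.2 - f p.1) ^ 2 * F (R p.1 p.2) * q p.1 p.2 * ρ p.1) / ∫ x, ρ x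

lemma accF_nonneg {F : ℝ → ℝ}
    (hF : (∀ r, F r = min 1 (Real.exp r)) ∨ (∀ r, F r = (1 + Real.exp (-r))⁻¹)) (r : ℝ) :
    0 ≤ F r := by
  rcases hF with h | h <;> rw [h r] <;> positivity

lemma accF_key {F : ℝ → ℝ}
    (hF : (∀ r, F r = min 1 (Real.exp r)) ∨ (∀ r, F r = (1 + Real.exp (-r))⁻¹)) (a b : ℝ) :
    F b ≤ Real.exp |b - a| * F a := by
  set c := |b - a| with hc
  have hc0 : 0 ≤ c := abs_nonneg _
  have hbac : b ≤ a + c := by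
    have := le_abs_self (b - a); linarith
  have hab : a - c ≤ b := by
    have := neg_abs_le (b - a); linarith
  have h1c : (1 : ℝ) ≤ Real.exp c := Real.one_le_exp hc0
  rcases hF with h | h
  · rw [h a, h b]
    rcases le_total 1 (Real.exp a) with h1 | h1
    · rw [min_eq_left h1]
      calc min 1 (Real.exp b) ≤ 1 := min_le_left _ _
        _ ≤ Real.exp c := h1c
        _ = Real.exp c * 1 := (mul_one _).symm
    · rw [min_eq_right h1, ← Real.exp_add]
      exact (min_le_right _ _).trans (Real.exp_le_exp.mpr (by linarith))
  · rw [h a, h b]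
    have key : Real.exp (-c) * (1 + Real.exp (-a)) ≤ 1 + Real.exp (-b) := by
      have e1 : Real.exp (-c) ≤ 1 := by
        rw [← Real.exp_zero]; exact Real.exp_le_exp.mpr (by linarith)
      have e2 : Real.exp (-c) * Real.exp (-a) ≤ Real.exp (-b) := by
        rw [← Real.exp_add]; exact Real.exp_le_exp.mpr (by linarith)
      nlinarith [Real.exp_pos (-a), Real.exp_pos (-c)]
    calc (1 + Real.exp (-b))⁻¹ ≤ (Real.exp (-c) * (1 + Real.exp (-a)))⁻¹ := by
          apply inv_anti₀ (by positivity) key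
      _ = Real.exp c * (1 + Real.exp (-a))⁻¹ := by
          rw [mul_inv, ← Real.exp_neg, neg_neg]

theorem stmt7 {n : ℕ} (V0 V1 : (Fin n → ℝ) → ℝ) (f : (Fin n → ℝ) → ℝ)
    (q : (Fin n → ℝ) → (Fin n → ℝ) → ℝ) (F : ℝ → ℝ)
    (hV0 : Measurable V0) (hV1 : Measurable V1) (hf : Measurable f)
    (hq : ∀ x y, 0 < q x y)
    (hba : BddAbove (Set.range V1)) (hbb : BddBelow (Set.range V1))
    (hint : Integrable (fun x => Real.exp (-(V0 x))))
    (hF : (∀ r, F r = min 1 (Real.exp r)) ∨ (∀ r, F r = (1 + Real.exp (-r))⁻¹))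
    (hI : Integrable (fun p : (Fin n → ℝ) × (Fin n → ℝ) =>
      (f p.2 - f p.1) ^ 2 *
        F ((V0 p.1 + V1 p.1) - (V0 p.2 + V1 p.2) + Real.log (q p.2 p.1 / q p.1 p.2)) *
        q p.1 p.2 * Real.exp (-(V0 p.1 + V1 p.1))))
    (hI0 : Integrable (fun p : (Fin n → ℝ) × (Fin n → ℝ) =>
      (f p.2 - f p.1) ^ 2 *
        F (V0 p.1 - V0 p.2 + Real.log (q p.2 p.1 / q p.1 p.2)) *
        q p.1 p.2 * Real.exp (-(V0 p.1)))) :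
    Real.exp (-(2 * ((⨆ x, V1 x) - ⨅ x, V1 x))) *
        oneStepSqJump f q F
          (fun x y => V0 x - V0 y + Real.log (q y x / q x y))
          (fun x => Real.exp (-(V0 x)))
      ≤ oneStepSqJump f q F
          (fun x y => (V0 x + V1 x) - (V0 y + V1 y) + Real.log (q y x / q x y))
          (fun x => Real.exp (-(V0 x + V1 x))) ∧
    oneStepSqJump f q F
        (fun x y => (V0 x + V1 x) - (V0 y + V1 y) + Real.log (q y x / q x y))
        (fun x => Real.exp (-(V0 x + V1 x)))
      ≤ Real.exp (2 * ((⨆ x, V1 x) - ⨅ x, V1 x)) *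
        oneStepSqJump f q F
          (fun x y => V0 x - V0 y + Real.log (q y x / q x y))
          (fun x => Real.exp (-(V0 x))) := by
  set M := ⨆ x, V1 x with hM
  set m := ⨅ x, V1 x with hm
  have hmle : ∀ x, m ≤ V1 x := fun x => ciInf_le hbb x
  have hMle : ∀ x, V1 x ≤ M := fun x => le_ciSup hba x
  have hosc : 0 ≤ M - m := by
    have := (hmle (fun _ => 0)).trans (hMle (fun _ => 0)); linarith
  have hFnn := accF_nonneg hF
  -- pointwise bounds on the numerator integrands
  have hup : ∀ p : (Fin n → ℝ) × (Fin n → ℝ),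
      (f p.2 - f p.1) ^ 2 *
        F ((V0 p.1 + V1 p.1) - (V0 p.2 + V1 p.2) + Real.log (q p.2 p.1 / q p.1 p.2)) *
        q p.1 p.2 * Real.exp (-(V0 p.1 + V1 p.1)) ≤
      (Real.exp (M - m) * Real.exp (-m)) *
        ((f p.2 - f p.1) ^ 2 *
          F (V0 p.1 - V0 p.2 + Real.log (q p.2 p.1 / q p.1 p.2)) *
          q p.1 p.2 * Real.exp (-(V0 p.1))) := by
    intro p
    set L := Real.log (q p.2 p.1 / q p.1 p.2)
    set R1 := (V0 p.1 + V1 p.1) - (V0 p.2 + V1 p.2) + L with hR1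
    set R0 := V0 p.1 - V0 p.2 + L with hR0
    have habs : |R1 - R0| ≤ M - m := by
      have h1 : R1 - R0 = V1 p.1 - V1 p.2 := by rw [hR1, hR0]; ring
      rw [h1]
      exact abs_le.mpr ⟨by linarith [hmle p.1, hmle p.2, hMle p.1, hMle p.2], by linarith [hmle p.1, hmle p.2, hMle p.1, hMle p.2]⟩
    have h1 : F R1 ≤ Real.exp (M - m) * F R0 :=
      (accF_key hF R0 R1).trans
        (mul_le_mul_of_nonneg_right (Real.exp_le_exp.mpr habs) (hFnn R0))
    have h2 : Real.exp (-(V0 p.1 + V1 p.1)) ≤ Real.exp (-m) * Real.exp (-(V0 p.1)) := by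
      rw [← Real.exp_add]; exact Real.exp_le_exp.mpr (by linarith [hmle p.1])
    calc (f p.2 - f p.1) ^ 2 * F R1 * q p.1 p.2 * Real.exp (-(V0 p.1 + V1 p.1))
        = ((f p.2 - f p.1) ^ 2 * q p.1 p.2) * (F R1 * Real.exp (-(V0 p.1 + V1 p.1))) := by ring
      _ ≤ ((f p.2 - f p.1) ^ 2 * q p.1 p.2) *
            ((Real.exp (M - m) * F R0) * (Real.exp (-m) * Real.exp (-(V0 p.1)))) := by
          exact mul_le_mul_of_nonneg_left
            (mul_le_mul h1 h2 (Real.exp_pos _).le (mul_nonneg (Real.exp_pos _).le (hFnn R0)))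
            (mul_nonneg (sq_nonneg _) (hq _ _).le)
      _ = (Real.exp (M - m) * Real.exp (-m)) *
            ((f p.2 - f p.1) ^ 2 * F R0 * q p.1 p.2 * Real.exp (-(V0 p.1))) := by ring
  have hlo : ∀ p : (Fin n → ℝ) × (Fin n → ℝ),
      (Real.exp (-(M - m)) * Real.exp (-M)) *
        ((f p.2 - f p.1) ^ 2 *
          F (V0 p.1 - V0 p.2 + Real.log (q p.2 p.1 / q p.1 p.2)) *
          q p.1 p.2 * Real.exp (-(V0 p.1))) ≤
      (f p.2 - f p.1) ^ 2 *
        F ((V0 p.1 + V1 p.1) - (V0 p.2 + V1 p.2) + Real.log (q p.2 p.1 / q p.1 p.2)) *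
        q p.1 p.2 * Real.exp (-(V0 p.1 + V1 p.1)) := by
    intro p
    set L := Real.log (q p.2 p.1 / q p.1 p.2)
    set R1 := (V0 p.1 + V1 p.1) - (V0 p.2 + V1 p.2) + L with hR1
    set R0 := V0 p.1 - V0 p.2 + L with hR0
    have habs : |R0 - R1| ≤ M - m := by
      have h1 : R0 - R1 = V1 p.2 - V1 p.1 := by rw [hR1, hR0]; ring
      rw [h1]
      exact abs_le.mpr ⟨by linarith [hmle p.1, hmle p.2, hMle p.1, hMle p.2], by linarith [hmle p.1, hmle p.2, hMle p.1, hMle p.2]⟩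
    have h1 : Real.exp (-(M - m)) * F R0 ≤ F R1 := by
      have h0 : F R0 ≤ Real.exp (M - m) * F R1 :=
        (accF_key hF R1 R0).trans
          (mul_le_mul_of_nonneg_right (Real.exp_le_exp.mpr habs) (hFnn R1))
      have := mul_le_mul_of_nonneg_left h0 (Real.exp_pos (-(M - m))).le
      rwa [← mul_assoc, ← Real.exp_add, neg_add_cancel, Real.exp_zero, one_mul] at this
    have h2 : Real.exp (-M) * Real.exp (-(V0 p.1)) ≤ Real.exp (-(V0 p.1 + V1 p.1)) := by
      rw [← Real.exp_add]; exact Real.exp_le_exp.mpr (by linarith [hMle p.1])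
    calc (Real.exp (-(M - m)) * Real.exp (-M)) *
          ((f p.2 - f p.1) ^ 2 * F R0 * q p.1 p.2 * Real.exp (-(V0 p.1)))
        = ((f p.2 - f p.1) ^ 2 * q p.1 p.2) *
            ((Real.exp (-(M - m)) * F R0) * (Real.exp (-M) * Real.exp (-(V0 p.1)))) := by ring
      _ ≤ ((f p.2 - f p.1) ^ 2 * q p.1 p.2) * (F R1 * Real.exp (-(V0 p.1 + V1 p.1))) := by
          exact mul_le_mul_of_nonneg_left
            (mul_le_mul h1 h2 (mul_nonneg (Real.exp_pos _).le (Real.exp_pos _).le) (hFnn R1))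
            (mul_nonneg (sq_nonneg _) (hq _ _).le)
      _ = (f p.2 - f p.1) ^ 2 * F R1 * q p.1 p.2 * Real.exp (-(V0 p.1 + V1 p.1)) := by ring
  -- numerator integral bounds
  have hNup : (∫ p : (Fin n → ℝ) × (Fin n → ℝ),
      (f p.2 - f p.1) ^ 2 *
        F ((V0 p.1 + V1 p.1) - (V0 p.2 + V1 p.2) + Real.log (q p.2 p.1 / q p.1 p.2)) *
        q p.1 p.2 * Real.exp (-(V0 p.1 + V1 p.1))) ≤
      (Real.exp (M - m) * Real.exp (-m)) * ∫ p : (Fin n → ℝ) × (Fin n → ℝ),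
        (f p.2 - f p.1) ^ 2 *
          F (V0 p.1 - V0 p.2 + Real.log (q p.2 p.1 / q p.1 p.2)) *
          q p.1 p.2 * Real.exp (-(V0 p.1)) := by
    rw [← integral_const_mul]
    exact integral_mono hI (hI0.const_mul _) hup
  have hNlo : (Real.exp (-(M - m)) * Real.exp (-M)) * (∫ p : (Fin n → ℝ) × (Fin n → ℝ),
        (f p.2 - f p.1) ^ 2 *
          F (V0 p.1 - V0 p.2 + Real.log (q p.2 p.1 / q p.1 p.2)) *
          q p.1 p.2 * Real.exp (-(V0 p.1))) ≤
      ∫ p : (Fin n → ℝ) × (Fin n → ℝ),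
      (f p.2 - f p.1) ^ 2 *
        F ((V0 p.1 + V1 p.1) - (V0 p.2 + V1 p.2) + Real.log (q p.2 p.1 / q p.1 p.2)) *
        q p.1 p.2 * Real.exp (-(V0 p.1 + V1 p.1)) := by
    rw [← integral_const_mul]
    exact integral_mono (hI0.const_mul _) hI hlo
  -- normalizing constants
  have hZint : Integrable (fun x => Real.exp (-(V0 x + V1 x))) := by
    apply Integrable.mono' (hint.const_mul (Real.exp (-m)))
      ((hV0.add hV1).neg.exp.aestronglyMeasurable)
    filter_upwards with x
    rw [Real.norm_of_nonneg (Real.exp_pos _).le, ← Real.exp_add]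
    exact Real.exp_le_exp.mpr (by simp only [Pi.neg_apply, Pi.add_apply]; linarith [hmle x])
  have hZ0pos : 0 < ∫ x, Real.exp (-(V0 x)) := integral_exp_pos hint
  have hZ1le : (∫ x, Real.exp (-(V0 x + V1 x))) ≤ Real.exp (-m) * ∫ x, Real.exp (-(V0 x)) := by
    rw [← integral_const_mul]
    refine integral_mono hZint (hint.const_mul _) fun x => ?_
    rw [← Real.exp_add]; exact Real.exp_le_exp.mpr (by linarith [hmle x])
  have hZ1ge : Real.exp (-M) * (∫ x, Real.exp (-(V0 x))) ≤ ∫ x, Real.exp (-(V0 x + V1 x)) := by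
    rw [← integral_const_mul]
    refine integral_mono (hint.const_mul _) hZint fun x => ?_
    rw [← Real.exp_add]; exact Real.exp_le_exp.mpr (by linarith [hMle x])
  have hZ1pos : 0 < ∫ x, Real.exp (-(V0 x + V1 x)) :=
    lt_of_lt_of_le (by positivity) hZ1ge
  have hN0nn : 0 ≤ ∫ p : (Fin n → ℝ) × (Fin n → ℝ),
      (f p.2 - f p.1) ^ 2 *
        F (V0 p.1 - V0 p.2 + Real.log (q p.2 p.1 / q p.1 p.2)) *
        q p.1 p.2 * Real.exp (-(V0 p.1)) :=
    integral_nonneg fun p =>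
      mul_nonneg (mul_nonneg (mul_nonneg (sq_nonneg _) (hFnn _)) (hq _ _).le)
        (Real.exp_pos _).le
  have hN1nn : 0 ≤ ∫ p : (Fin n → ℝ) × (Fin n → ℝ),
      (f p.2 - f p.1) ^ 2 *
        F ((V0 p.1 + V1 p.1) - (V0 p.2 + V1 p.2) + Real.log (q p.2 p.1 / q p.1 p.2)) *
        q p.1 p.2 * Real.exp (-(V0 p.1 + V1 p.1)) :=
    integral_nonneg fun p =>
      mul_nonneg (mul_nonneg (mul_nonneg (sq_nonneg _) (hFnn _)) (hq _ _).le)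
        (Real.exp_pos _).le
  simp only [oneStepSqJump]
  constructor
  · have key := div_le_div₀ hN1nn hNlo hZ1pos hZ1le
    rw [mul_div_mul_comm] at key
    have harg : Real.exp (-(M - m)) * Real.exp (-M) / Real.exp (-m)
        = Real.exp (-(2 * (M - m))) := by
      rw [← Real.exp_add, ← Real.exp_sub]; ring_nf
    rwa [harg] at key
  · have key := div_le_div₀ (by positivity) hNup hZ1pos
      (le_of_eq rfl)
    have key2 := div_le_div₀ (mul_nonneg (by positivity) hN0nn) hNup
      (by positivity : (0:ℝ) < Real.exp (-M) * ∫ x, Real.exp (-(V0 x))) hZ1ge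
    rw [mul_div_mul_comm] at key2
    have harg : Real.exp (M - m) * Real.exp (-m) / Real.exp (-M)
        = Real.exp (2 * (M - m)) := by
      rw [← Real.exp_add, ← Real.exp_sub]; ring_nf
    rwa [harg] at key2
end

section
/- Suppose the potential satisfies V_0(x) ≥ V_min + C_p Σ_{i=1}^n |x_i|^p with p ≥ 1, C_p > 0, and V = V_0 + V_1 with V_1 bounded. Then the Boltzmann measure μ ∝ e^{-V} satisfies a concentration inequality: there exist constants C₀ and κ > 0, depending only on n, p, C_p, V_min and osc V_1 (but not on V_1 otherwise), such that P_μ(|X| ≥ t) ≤ C₀ e^{−κ t^p} for all t ≥ 0. -/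
open MeasureTheory Real

private lemma int1d' {b p : ℝ} (hp : 1 ≤ p) (hb : 0 < b) :
    Integrable (fun y : ℝ => Real.exp (-b * |y| ^ p)) := by
  have hIoi : IntegrableOn (fun y : ℝ => Real.exp (-b * |y| ^ p)) (Set.Ioi 0) := by
    have h := integrableOn_rpow_mul_exp_neg_mul_rpow (s := 0) (p := p) (b := b)
      (by norm_num) (by linarith) hb
    refine h.congr_fun (fun x hx => ?_) measurableSet_Ioi
    beta_reduce
    rw [Real.rpow_zero, one_mul, abs_of_pos hx]
  have m : MeasurableEmbedding fun x : ℝ => -x := (Homeomorph.neg ℝ).measurableEmbedding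
  have hIic : IntegrableOn (fun y : ℝ => Real.exp (-b * |y| ^ p)) (Set.Iic 0) := by
    rw [← Measure.map_neg_eq_self (volume : Measure ℝ)]
    rw [m.integrableOn_map_iff]
    simp_rw [Function.comp_def, abs_neg, Set.neg_preimage, Set.neg_Iic, neg_zero]
    exact Iff.mpr integrableOn_Ici_iff_integrableOn_Ioi hIoi
  have := hIic.union hIoi
  rwa [Set.Iic_union_Ioi, integrableOn_univ] at this

private lemma intgE' {n : ℕ} {b p : ℝ} (hp : 1 ≤ p) (hb : 0 < b) :
    Integrable (fun x : EuclideanSpace ℝ (Fin n) => Real.exp (-b * ∑ i, |x i| ^ p)) := by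
  have hpi : Integrable (fun x : Fin n → ℝ => Real.exp (-b * ∑ i, |x i| ^ p)) := by
    have h : Integrable (fun x : Fin n → ℝ => ∏ i, Real.exp (-b * |x i| ^ p)) :=
      Integrable.fintype_prod (fun _ => int1d' hp hb)
    refine h.congr (Filter.Eventually.of_forall fun x => ?_)
    show (∏ i, Real.exp (-b * |x i| ^ p)) = Real.exp (-b * ∑ i, |x i| ^ p)
    rw [← Real.exp_sum, ← Finset.mul_sum]
  exact ((PiLp.volume_preserving_ofLp (Fin n)).integrable_comp hpi.aestronglyMeasurable).mpr hpi

private lemma norm_rpow_le' {n : ℕ} (p : ℝ) (hp : 1 ≤ p) (x : EuclideanSpace ℝ (Fin n)) :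
    ‖x‖ ^ p ≤ ((n : ℝ) + 1) ^ (p / 2) * ∑ i, |x i| ^ p := by
  have hp0 : (0:ℝ) < p := lt_of_lt_of_le one_pos hp
  set S := ∑ i, |x i| ^ p with hSdef
  have hS : 0 ≤ S := Finset.sum_nonneg fun i _ => Real.rpow_nonneg (abs_nonneg _) p
  have h1 : ∀ i, |x i| ≤ S ^ (1 / p) := by
    intro i
    have hle : |x i| ^ p ≤ S :=
      Finset.single_le_sum (f := fun i => |x i| ^ p)
        (fun j _ => Real.rpow_nonneg (abs_nonneg _) p) (Finset.mem_univ i)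
    have := Real.rpow_le_rpow (Real.rpow_nonneg (abs_nonneg _) p) hle
      (by positivity : (0:ℝ) ≤ 1 / p)
    rwa [← Real.rpow_mul (abs_nonneg _), mul_one_div, div_self hp0.ne', Real.rpow_one] at this
  have hR : (0:ℝ) ≤ ((n : ℝ) + 1) ^ ((1:ℝ) / 2) * S ^ (1 / p) := by positivity
  have h2 : ‖x‖ ≤ ((n : ℝ) + 1) ^ ((1:ℝ) / 2) * S ^ (1 / p) := by
    rw [EuclideanSpace.norm_eq]
    have hsum : (∑ i, ‖x i‖ ^ 2) ≤ (((n : ℝ) + 1) ^ ((1:ℝ) / 2) * S ^ (1 / p)) ^ 2 := by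
      have : (∑ i, ‖x i‖ ^ 2) ≤ (n : ℝ) * (S ^ (1 / p)) ^ 2 := by
        calc (∑ i, ‖x i‖ ^ 2) ≤ ∑ _i : Fin n, (S ^ (1 / p)) ^ 2 :=
              Finset.sum_le_sum fun i _ => by
                have := pow_le_pow_left₀ (abs_nonneg (x i)) (h1 i) 2
                simpa [Real.norm_eq_abs] using this
          _ = (n : ℝ) * (S ^ (1 / p)) ^ 2 := by simp [mul_comm]
      refine this.trans ?_
      rw [mul_pow]
      have hhalf : (((n : ℝ) + 1) ^ ((1:ℝ) / 2)) ^ 2 = (n : ℝ) + 1 := by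
        rw [← Real.rpow_natCast (((n : ℝ) + 1) ^ ((1:ℝ)/2)) 2, ← Real.rpow_mul (by positivity)]
        norm_num
      rw [hhalf]
      have : (n : ℝ) ≤ (n : ℝ) + 1 := by linarith
      exact mul_le_mul_of_nonneg_right this (by positivity)
    calc Real.sqrt (∑ i, ‖x i‖ ^ 2) ≤ Real.sqrt ((((n : ℝ) + 1) ^ ((1:ℝ)/2) * S ^ (1/p)) ^ 2) :=
          Real.sqrt_le_sqrt hsum
      _ = ((n : ℝ) + 1) ^ ((1:ℝ)/2) * S ^ (1/p) := Real.sqrt_sq hR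
  have h3 := Real.rpow_le_rpow (norm_nonneg x) h2 hp0.le
  refine h3.trans ?_
  rw [Real.mul_rpow (by positivity) (by positivity), ← Real.rpow_mul (by positivity),
    ← Real.rpow_mul hS]
  rw [one_div_mul_cancel hp0.ne', Real.rpow_one]
  ring_nf
  exact le_refl _

theorem stmt15 {n : ℕ} (p Cp Vmin : ℝ) (hp : 1 ≤ p) (hCp : 0 < Cp)
    (V0 V1 : EuclideanSpace ℝ (Fin n) → ℝ)
    (hV0 : Measurable V0) (hV1 : Measurable V1)
    (hlb : ∀ x : EuclideanSpace ℝ (Fin n), Vmin + Cp * ∑ i, |x i| ^ p ≤ V0 x)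
    (hba : BddAbove (Set.range V1)) (hbb : BddBelow (Set.range V1))
    (μ : Measure (EuclideanSpace ℝ (Fin n)))
    (hμ : ∀ A : Set (EuclideanSpace ℝ (Fin n)), MeasurableSet A →
      (μ A).toReal =
        (∫ x in A, Real.exp (-(V0 x + V1 x))) / ∫ x, Real.exp (-(V0 x + V1 x))) :
    ∃ C0 κ : ℝ, 0 < κ ∧ ∀ t : ℝ, 0 ≤ t →
      (μ {x | t ≤ ‖x‖}).toReal ≤ C0 * Real.exp (-κ * t ^ p) := by
  obtain ⟨b, hb⟩ := hbb
  have hb' : ∀ x, b ≤ V1 x := fun x => hb (Set.mem_range_self x)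
  have hp0 : (0:ℝ) < p := lt_of_lt_of_le one_pos hp
  -- constants
  set A : ℝ := ((n : ℝ) + 1) ^ (p / 2) with hAdef
  have hA : 0 < A := by positivity
  set κ : ℝ := Cp / (2 * A) with hκdef
  have hκ : 0 < κ := by positivity
  -- comparison
  have hcomp : ∀ x : EuclideanSpace ℝ (Fin n), ‖x‖ ^ p ≤ A * ∑ i, |x i| ^ p :=
    fun x => norm_rpow_le' p hp x
  -- notation
  set f : EuclideanSpace ℝ (Fin n) → ℝ := fun x => Real.exp (-(V0 x + V1 x)) with hfdef
  set g : EuclideanSpace ℝ (Fin n) → ℝ := fun x => Real.exp (-(Cp / 2) * ∑ i, |x i| ^ p)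
    with hgdef
  have hg_int : Integrable g := intgE' hp (by positivity)
  have hg_nonneg : ∀ x, 0 ≤ g x := fun x => (Real.exp_pos _).le
  -- f pointwise bound by const * g
  have hfg : ∀ x, f x ≤ Real.exp (-Vmin - b) * g x := by
    intro x
    rw [hfdef, hgdef, ← Real.exp_add]
    apply Real.exp_le_exp.mpr
    have h1 := hlb x
    have h2 := hb' x
    have h3 : 0 ≤ ∑ i, |x i| ^ p :=
      Finset.sum_nonneg fun i _ => Real.rpow_nonneg (abs_nonneg _) p
    nlinarith
  have hf_meas : AEStronglyMeasurable f volume :=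
    (Real.measurable_exp.comp ((hV0.add hV1).neg)).aestronglyMeasurable
  have hf_int : Integrable f := by
    refine Integrable.mono' (hg_int.const_mul (Real.exp (-Vmin - b))) hf_meas ?_
    filter_upwards with x
    rw [Real.norm_eq_abs, abs_of_pos (Real.exp_pos _)]
    exact hfg x
  -- denominator is positive
  have hI : 0 < ∫ x, f x := by
    rw [integral_pos_iff_support_of_nonneg (fun x => (Real.exp_pos _).le) hf_int]
    have : Function.support f = Set.univ :=
      Set.eq_univ_of_forall fun x => (Real.exp_pos _).ne'
    rw [this]
    exact isOpen_univ.measure_pos volume Set.univ_nonempty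
  set K : ℝ := ∫ x, g x with hKdef
  have hK : 0 ≤ K := integral_nonneg hg_nonneg
  refine ⟨Real.exp (-Vmin - b) * K / ∫ x, f x, κ, hκ, fun t ht => ?_⟩
  have hSmeas : MeasurableSet {x : EuclideanSpace ℝ (Fin n) | t ≤ ‖x‖} :=
    measurableSet_le measurable_const continuous_norm.measurable
  rw [hμ _ hSmeas]
  set D : ℝ := Real.exp (-Vmin - b) * Real.exp (-κ * t ^ p) with hDdef
  have hD : 0 ≤ D := by positivity
  -- pointwise bound on the set
  have hpt : ∀ x ∈ {x : EuclideanSpace ℝ (Fin n) | t ≤ ‖x‖}, f x ≤ D * g x := by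
    intro x hx
    have hx' : t ≤ ‖x‖ := hx
    have htp : t ^ p ≤ ‖x‖ ^ p := Real.rpow_le_rpow ht hx' hp0.le
    have hS : t ^ p ≤ A * ∑ i, |x i| ^ p := htp.trans (hcomp x)
    have hκt : κ * t ^ p ≤ Cp / 2 * ∑ i, |x i| ^ p := by
      have h4 := mul_le_mul_of_nonneg_left hS hκ.le
      have h5 : κ * (A * ∑ i, |x i| ^ p) = Cp / 2 * ∑ i, |x i| ^ p := by
        rw [hκdef]; field_simp
      linarith
    rw [hfdef, hDdef, hgdef, mul_assoc, ← Real.exp_add, ← Real.exp_add]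
    apply Real.exp_le_exp.mpr
    have h1 := hlb x
    have h2 := hb' x
    linarith
  have step1 : (∫ x in {x : EuclideanSpace ℝ (Fin n) | t ≤ ‖x‖}, f x)
      ≤ ∫ x in {x : EuclideanSpace ℝ (Fin n) | t ≤ ‖x‖}, D * g x :=
    setIntegral_mono_on hf_int.integrableOn ((hg_int.const_mul D).integrableOn) hSmeas hpt
  have step2 : (∫ x in {x : EuclideanSpace ℝ (Fin n) | t ≤ ‖x‖}, D * g x) ≤ D * K := by
    rw [integral_const_mul]
    refine mul_le_mul_of_nonneg_left ?_ hD
    exact setIntegral_le_integral hg_int (Filter.Eventually.of_forall hg_nonneg)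
  have hnum : (∫ x in {x : EuclideanSpace ℝ (Fin n) | t ≤ ‖x‖}, f x) ≤ D * K :=
    step1.trans step2
  calc (∫ x in {x : EuclideanSpace ℝ (Fin n) | t ≤ ‖x‖}, f x) / ∫ x, f x
      ≤ (D * K) / ∫ x, f x := by gcongr
    _ = Real.exp (-Vmin - b) * K / (∫ x, f x) * Real.exp (-κ * t ^ p) := by
        rw [hDdef]; ring
end
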